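/- arXiv:1910.12664 — 8 statements merged into one kernel-verified Lean document; each statement's English description precedes it below -/
import Mathlib

section
/- Let r be an odd prime and x an odd integer coprime with r. Then 2r divides Ψ_{2r}(x) if and only if x ≡ 1 (mod r) or x ≡ -1 (mod r). -/
/-- For `r` an odd prime and `x` odd, coprime with `r`:
`2r ∣ Ψ_{2r}(x)` iff `x ≡ ±1 (mod r)`. -/
theorem two_r_dvd_psi_iff (r : ℕ) (hr : r.Prime) (hrodd : Odd r) (x : ℤ)
    (hxodd : Odd x) (hx : IsCoprime x (r : ℤ)) :
    ((2 * r : ℕ) : ℤ) ∣ ∑ i ∈ Finset.range (2 * r), x ^ i ↔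
      x ≡ 1 [ZMOD r] ∨ x ≡ -1 [ZMOD r] := by
  haveI : Fact r.Prime := ⟨hr⟩
  set S : ℤ := ∑ i ∈ Finset.range (2 * r), x ^ i with hS
  have h20 : (2 : ZMod 2) = 0 := by decide
  have h2 : (2 : ℤ) ∣ S := by
    have : ((2:ℕ):ℤ) ∣ S := by
      rw [← ZMod.intCast_zmod_eq_zero_iff_dvd]
      push_cast [hS]
      have hx2 : (x : ZMod 2) = 1 := by
        rcases hxodd with ⟨k, hk⟩
        subst hk; push_cast; rw [mul_comm, h20, mul_zero, zero_add]
      simp [hx2, h20]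
    exact_mod_cast this
  have hrdvd_iff : ((r:ℤ) ∣ S) ↔ ((x : ZMod r) = 1 ∨ (x : ZMod r) = -1) := by
    constructor
    · intro h
      have hS0 : ((S : ZMod r)) = 0 := by
        rw [ZMod.intCast_zmod_eq_zero_iff_dvd]; exact_mod_cast h
      have hgeom : (∑ i ∈ Finset.range (2*r), (x : ZMod r) ^ i) * ((x:ZMod r) - 1)
          = (x:ZMod r) ^ (2*r) - 1 := geom_sum_mul _ _
      have hsum0 : (∑ i ∈ Finset.range (2*r), (x : ZMod r) ^ i) = 0 := by
        rw [← hS0, hS]; push_cast; rfl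
      rw [hsum0, zero_mul] at hgeom
      have hpow : (x : ZMod r) ^ (2*r) = (x : ZMod r) * (x : ZMod r) := by
        rw [mul_comm 2 r, pow_mul, ZMod.pow_card, sq]
      rw [hpow] at hgeom
      have : (x : ZMod r) * (x : ZMod r) = 1 := by linear_combination -hgeom
      exact mul_self_eq_one_iff.mp this
    · intro h
      rw [← ZMod.intCast_zmod_eq_zero_iff_dvd, hS]
      push_cast
      rcases h with h | h
      · simp [h, ZMod.natCast_self]
      · rw [h, neg_one_geom_sum]
        simp [Nat.even_mul]
  have hcop : IsCoprime (2 : ℤ) ((r:ℕ) : ℤ) := by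
    rw [Int.isCoprime_iff_gcd_eq_one]
    rcases hrodd with ⟨k, hk⟩
    subst hk
    simp [Int.gcd]
  constructor
  · intro h
    have hr' : (r:ℤ) ∣ S := dvd_trans (by push_cast; exact dvd_mul_left _ 2) h
    rcases hrdvd_iff.mp hr' with h1 | h1
    · left; rw [← ZMod.intCast_eq_intCast_iff]; push_cast; exact h1
    · right; rw [← ZMod.intCast_eq_intCast_iff]; push_cast; exact h1
  · intro h
    have hr' : (r:ℤ) ∣ S := by
      apply hrdvd_iff.mpr
      rcases h with h | h
      · left; rw [← ZMod.intCast_eq_intCast_iff] at h; push_cast at h; exact h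
      · right; rw [← ZMod.intCast_eq_intCast_iff] at h; push_cast at h; exact h
    push_cast
    exact hcop.mul_dvd h2 hr'
end

section
/- Let r < r' be odd primes with r not dividing r' - 1, and let x be an integer coprime with rr'. Then rr' divides Ψ_{rr'}(x) if and only if x ≡ 1 (mod rr'). -/
lemma psi_aux (p : ℕ) (hp : p.Prime) (n : ℕ) (hpn : p ∣ n)
    (hcop : Nat.Coprime n (p - 1)) (x : ℤ) (hx : ¬ (p : ℤ) ∣ x) :
    ((p : ℤ) ∣ ∑ i ∈ Finset.range n, x ^ i) ↔ x ≡ 1 [ZMOD (p : ℤ)] := by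
  haveI : Fact p.Prime := ⟨hp⟩
  rw [← ZMod.intCast_zmod_eq_zero_iff_dvd, ← ZMod.intCast_eq_intCast_iff, Int.cast_one]
  push_cast
  set y : ZMod p := (x : ZMod p) with hy
  constructor
  · intro h
    by_contra h1
    have hpow : y ^ n = 1 := by
      have := geom_sum_mul y n
      rw [h, zero_mul] at this
      have : y ^ n - 1 = 0 := this.symm
      linear_combination this
    have hd1 : orderOf y ∣ n := orderOf_dvd_of_pow_eq_one hpow
    have hy0 : y ≠ 0 := by
      rw [hy, Ne, ZMod.intCast_zmod_eq_zero_iff_dvd]; exact hx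
    have hd2 : orderOf y ∣ p - 1 :=
      orderOf_dvd_of_pow_eq_one (ZMod.pow_card_sub_one_eq_one hy0)
    have : orderOf y ∣ Nat.gcd n (p - 1) := Nat.dvd_gcd hd1 hd2
    rw [hcop, Nat.dvd_one] at this
    exact h1 (orderOf_eq_one_iff.mp this)
  · intro h
    rw [h]
    simp only [one_pow, Finset.sum_const, Finset.card_range, nsmul_eq_mul, mul_one]
    exact (ZMod.natCast_eq_zero_iff n p).mpr hpn

/-- For `r < r'` odd primes with `r ∤ r' - 1` and `gcd(x, rr') = 1`:
`rr' ∣ Ψ_{rr'}(x)` iff `x ≡ 1 (mod rr')`. -/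
theorem rr'_dvd_psi_iff (r r' : ℕ) (hr : r.Prime) (hr' : r'.Prime)
    (hrodd : Odd r) (hr'odd : Odd r') (hlt : r < r') (hnd : ¬ r ∣ (r' - 1))
    (x : ℤ) (hx : IsCoprime x ((r * r' : ℕ) : ℤ)) :
    ((r * r' : ℕ) : ℤ) ∣ ∑ i ∈ Finset.range (r * r'), x ^ i ↔
      x ≡ 1 [ZMOD (r * r' : ℕ)] := by
  have hr2 := hr.two_le
  have hr'2 := hr'.two_le
  have hrne : (r : ℤ) ≠ (r' : ℤ) := by exact_mod_cast hlt.ne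
  have hrr'cop : IsCoprime (r : ℤ) (r' : ℤ) := by
    rw [Int.isCoprime_iff_gcd_eq_one]
    exact Nat.Coprime.gcd_eq_one ((Nat.coprime_primes hr hr').mpr hlt.ne)
  have hrr'N : Nat.Coprime (r : ℤ).natAbs (r' : ℤ).natAbs := by
    simpa using (Nat.coprime_primes hr hr').mpr hlt.ne
  have hxr : ¬ (r : ℤ) ∣ x := by
    intro h
    have hc : IsCoprime x (r : ℤ) := hx.of_isCoprime_of_dvd_right (by push_cast; exact Dvd.intro _ rfl)
    have hu : IsUnit (r : ℤ) := hc.isUnit_of_dvd' h dvd_rfl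
    rw [Int.isUnit_iff] at hu
    have := hr.two_le
    omega
  have hxr' : ¬ (r' : ℤ) ∣ x := by
    intro h
    have hc : IsCoprime x (r' : ℤ) := hx.of_isCoprime_of_dvd_right (by push_cast; exact Dvd.intro_left _ rfl)
    have hu : IsUnit (r' : ℤ) := hc.isUnit_of_dvd' h dvd_rfl
    rw [Int.isUnit_iff] at hu
    have := hr'.two_le
    omega
  -- coprimality of n = r*r' with p-1 for each prime
  have h1 : Nat.Coprime (r * r') (r - 1) := by
    apply Nat.Coprime.mul
    · exact (Nat.Prime.coprime_iff_not_dvd hr).mpr (by intro h; have := Nat.le_of_dvd (by omega) h; omega)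
    · exact (Nat.Prime.coprime_iff_not_dvd hr').mpr (by intro h; have := Nat.le_of_dvd (by omega) h; omega)
  have h2 : Nat.Coprime (r * r') (r' - 1) := by
    apply Nat.Coprime.mul
    · exact (Nat.Prime.coprime_iff_not_dvd hr).mpr hnd
    · exact (Nat.Prime.coprime_iff_not_dvd hr').mpr (by intro h; have := Nat.le_of_dvd (by have := hr'.two_le; omega) h; omega)
  have ha := psi_aux r hr (r * r') ⟨r', rfl⟩ h1 x hxr
  have hb := psi_aux r' hr' (r * r') ⟨r, mul_comm r r'⟩ h2 x hxr'
  constructor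
  · intro h
    have hdr : (r : ℤ) ∣ ∑ i ∈ Finset.range (r * r'), x ^ i :=
      dvd_trans (by push_cast; exact Dvd.intro _ rfl) h
    have hdr' : (r' : ℤ) ∣ ∑ i ∈ Finset.range (r * r'), x ^ i :=
      dvd_trans (by push_cast; exact Dvd.intro_left _ rfl) h
    have := (Int.modEq_and_modEq_iff_modEq_mul hrr'N).mp ⟨ha.mp hdr, hb.mp hdr'⟩
    simpa using this
  · intro h
    have h' : x ≡ 1 [ZMOD ((r : ℤ) * (r' : ℤ))] := by simpa using h
    obtain ⟨hA, hB⟩ := (Int.modEq_and_modEq_iff_modEq_mul hrr'N).mpr h'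
    have := IsCoprime.mul_dvd hrr'cop (ha.mpr hA) (hb.mpr hB)
    simpa using this
end

section
/- Let b = r_1 r_2 ⋯ r_ℓ be a product of distinct primes with r_1 < r_2 < ⋯ < r_ℓ, and let x be an integer coprime with b. Then b divides Ψ_b(x) if and only if x ≡ 1 (mod r_1) and x^{b/r_i} ≡ 1 (mod r_i) for all i = 2, …, ℓ. -/
private lemma psi_dvd_aux (p b : ℕ) [hp : Fact p.Prime] (hpb : p ∣ b) (x : ℤ) :
    (p : ℤ) ∣ ∑ i ∈ Finset.range b, x ^ i ↔ (x : ZMod p) ^ b = 1 := by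
  rw [← ZMod.intCast_zmod_eq_zero_iff_dvd]
  push_cast
  by_cases hy : (x : ZMod p) = 1
  · rw [hy]
    simp only [one_pow, Finset.sum_const, Finset.card_range, nsmul_eq_mul, mul_one,
      eq_self_iff_true, iff_true]
    exact (ZMod.natCast_eq_zero_iff b p).mpr hpb
  · rw [geom_sum_eq hy, div_eq_zero_iff, sub_eq_zero, sub_eq_zero]
    simp [hy]

private lemma pow_eq_one_iff_aux (p m : ℕ) [hp : Fact p.Prime] (y : ZMod p) (hy : y ≠ 0)
    (hcop : Nat.Coprime m (p - 1)) : y ^ m = 1 ↔ y = 1 := by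
  constructor
  · intro h
    have h1 : orderOf y ∣ m := orderOf_dvd_of_pow_eq_one h
    have h2 : orderOf y ∣ p - 1 :=
      orderOf_dvd_of_pow_eq_one (ZMod.pow_card_sub_one_eq_one hy)
    have : orderOf y = 1 :=
      Nat.eq_one_of_dvd_one (hcop ▸ Nat.dvd_gcd h1 h2)
    exact orderOf_eq_one_iff.mp this
  · rintro rfl; simp

/-- For `b = r_1 ⋯ r_ℓ` a product of distinct primes `r_1 < ⋯ < r_ℓ` and `gcd(x,b)=1`:
`b ∣ Ψ_b(x)` iff `x ≡ 1 (mod r_1)` and `x^{b/r_i} ≡ 1 (mod r_i)` for `i = 2, …, ℓ`. -/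
theorem squarefree_dvd_psi_iff (ℓ : ℕ) (hℓ : 0 < ℓ) (r : Fin ℓ → ℕ)
    (hprime : ∀ i, (r i).Prime) (hmono : StrictMono r)
    (b : ℕ) (hb : b = ∏ i, r i)
    (x : ℤ) (hx : IsCoprime x (b : ℤ)) :
    ((b : ℤ) ∣ ∑ i ∈ Finset.range b, x ^ i) ↔
      (x ≡ 1 [ZMOD r ⟨0, hℓ⟩] ∧
        ∀ i : Fin ℓ, i ≠ ⟨0, hℓ⟩ → x ^ (b / r i) ≡ 1 [ZMOD r i]) := by
  have hfact : ∀ i, Fact (r i).Prime := fun i => ⟨hprime i⟩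
  have hrb : ∀ i, r i ∣ b := fun i => hb ▸ Finset.dvd_prod_of_mem r (Finset.mem_univ i)
  set i0 : Fin ℓ := ⟨0, hℓ⟩ with hi0
  -- x is nonzero mod each r i
  have hy0 : ∀ i, ((x : ZMod (r i)) : ZMod (r i)) ≠ 0 := by
    intro i h0
    haveI := hfact i
    have hdx : ((r i : ℤ)) ∣ x := (ZMod.intCast_zmod_eq_zero_iff_dvd x (r i)).mp h0
    have hdb : ((r i : ℤ)) ∣ (b : ℤ) := Int.natCast_dvd_natCast.mpr (hrb i)
    have := hx.isUnit_of_dvd' hdx hdb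
    rw [Int.isUnit_iff] at this
    have h2 := (hprime i).two_le
    omega
  -- Frobenius: x^b = x^(b / r i) mod r i
  have hfrob : ∀ i, (x : ZMod (r i)) ^ b = (x : ZMod (r i)) ^ (b / r i) := by
    intro i
    haveI := hfact i
    conv_lhs => rw [← Nat.div_mul_cancel (hrb i), pow_mul, ZMod.pow_card]
  -- step 1: b ∣ S ↔ each prime power condition
  have step1 : ((b : ℤ) ∣ ∑ i ∈ Finset.range b, x ^ i) ↔
      ∀ i, (x : ZMod (r i)) ^ (b / r i) = 1 := by
    constructor
    · intro h i
      haveI := hfact i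
      rw [← hfrob i, ← psi_dvd_aux (r i) b (hrb i) x]
      exact dvd_trans (Int.natCast_dvd_natCast.mpr (hrb i)) h
    · intro h
      have hall : ∀ i, ((r i : ℤ)) ∣ ∑ j ∈ Finset.range b, x ^ j := by
        intro i
        haveI := hfact i
        rw [psi_dvd_aux (r i) b (hrb i) x, hfrob i]
        exact h i
      have hprod : ((∏ i, r i : ℕ) : ℤ) ∣ ∑ j ∈ Finset.range b, x ^ j := by
        push_cast
        refine Finset.prod_dvd_of_coprime ?_ (fun i _ => hall i)
        intro i _ j _ hij
        exact Nat.isCoprime_iff_coprime.mpr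
          ((Nat.coprime_primes (hprime i) (hprime j)).mpr fun he => hij (hmono.injective he))
      simpa only [← hb] using hprod
  rw [step1]
  -- coprimality of b/r i0 with r i0 - 1
  have hcop : Nat.Coprime (b / r i0) (r i0 - 1) := by
    refine Nat.Coprime.coprime_dvd_left (Nat.div_dvd_of_dvd (hrb i0)) ?_
    rw [hb]
    apply Nat.Coprime.prod_left
    intro j _
    rw [(hprime j).coprime_iff_not_dvd]
    intro hdvd
    have h1 : r i0 ≤ r j := hmono.monotone (Fin.le_def.mpr (Nat.zero_le _))
    have h2 := (hprime i0).two_le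
    have h3 : r j ≤ r i0 - 1 := Nat.le_of_dvd (by omega) hdvd
    omega
  haveI := hfact i0
  have hmod0 : (x : ZMod (r i0)) ^ (b / r i0) = 1 ↔ x ≡ 1 [ZMOD r i0] := by
    rw [pow_eq_one_iff_aux _ _ _ (hy0 i0) hcop, ← ZMod.intCast_eq_intCast_iff]
    push_cast
    rfl
  have hmodi : ∀ i, ((x : ZMod (r i)) ^ (b / r i) = 1 ↔ x ^ (b / r i) ≡ 1 [ZMOD r i]) := by
    intro i
    rw [← ZMod.intCast_eq_intCast_iff]
    push_cast
    rfl
  constructor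
  · intro h
    exact ⟨(hmod0).mp (h i0), fun i _ => (hmodi i).mp (h i)⟩
  · rintro ⟨h1, h2⟩ i
    by_cases hi : i = i0
    · subst hi; exact (hmod0).mpr h1
    · exact (hmodi i).mpr (h2 i hi)
end

section
/- Let r be a prime, t a positive integer, and x an integer coprime with r. Then r^t divides Ψ_{r^t}(x) if and only if the multiplicative order of x modulo r^t is a power of r (equal to r^h for some 0 ≤ h ≤ t-1). -/
open Finset

private lemma geom_sum_range_mul (x : ℤ) (a b : ℕ) :
    ∑ i ∈ range (a * b), x ^ i =
      (∑ i ∈ range a, x ^ i) * ∑ j ∈ range b, (x ^ a) ^ j := by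
  induction b with
  | zero => simp
  | succ b ih =>
      rw [Nat.mul_succ, Finset.sum_range_add, ih, Finset.sum_range_succ, mul_add]
      congr 1
      rw [Finset.sum_mul]
      refine Finset.sum_congr rfl fun i _ => ?_
      rw [pow_add, pow_mul]
      ring

private lemma dvd_geom_sum_of_dvd_sub (r : ℕ) (y : ℤ) (h : (r : ℤ) ∣ y - 1) :
    (r : ℤ) ∣ ∑ k ∈ range r, y ^ k := by
  have key : ∑ k ∈ range r, y ^ k = (∑ k ∈ range r, (y ^ k - 1)) + r := by
    rw [Finset.sum_sub_distrib]
    simp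
  rw [key]
  refine dvd_add (Finset.dvd_sum fun k _ => h.trans ?_) ⟨1, by ring⟩
  simpa using sub_dvd_pow_sub_pow y 1 k

private lemma pow_pow_sub_one (r : ℕ) (x : ℤ) (h : (r : ℤ) ∣ x - 1) (k : ℕ) :
    (r : ℤ) ^ (k + 1) ∣ x ^ r ^ k - 1 := by
  induction k with
  | zero => simpa using h
  | succ k ih =>
      have h1 : (r : ℤ) ∣ x ^ r ^ k - 1 :=
        dvd_trans (dvd_pow_self (r : ℤ) (Nat.succ_ne_zero k)) ih
      have key : x ^ r ^ (k + 1) - 1 =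
          (x ^ r ^ k - 1) * ∑ j ∈ range r, (x ^ r ^ k) ^ j := by
        rw [mul_comm, geom_sum_mul, ← pow_mul, ← pow_succ]
      rw [key, pow_succ]
      exact mul_dvd_mul ih (dvd_geom_sum_of_dvd_sub r _ h1)

private lemma rpow_dvd_geom_sum (r : ℕ) (x : ℤ) (h : (r : ℤ) ∣ x - 1) (t : ℕ) :
    (r : ℤ) ^ t ∣ ∑ i ∈ range (r ^ t), x ^ i := by
  induction t with
  | zero => simp
  | succ t ih =>
      rw [pow_succ, pow_succ, geom_sum_range_mul]
      refine mul_dvd_mul ih (dvd_geom_sum_of_dvd_sub r _ (h.trans ?_))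
      simpa using sub_dvd_pow_sub_pow x 1 (r ^ t)

private lemma geom_sum_zmod (r : ℕ) [Fact r.Prime] (t : ℕ) (y : ZMod r) (hy : y ≠ 1) :
    ∑ i ∈ range (r ^ t), y ^ i = 1 := by
  have hfrob : y ^ r ^ t = y := by
    induction t with
    | zero => simp
    | succ t ih => rw [pow_succ, pow_mul, ih, ZMod.pow_card]
  have h2 : (∑ i ∈ range (r ^ t), y ^ i) * (y - 1) = 1 * (y - 1) := by
    rw [geom_sum_mul, hfrob, one_mul]
  exact mul_right_cancel₀ (sub_ne_zero.mpr hy) h2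

/-- For `r` prime, `t ≥ 1` and `gcd(x,r)=1`: `r^t ∣ Ψ_{r^t}(x)` iff the multiplicative
order of `x` modulo `r^t` equals `r^h` for some `0 ≤ h ≤ t-1`. -/
theorem prime_pow_dvd_psi_iff (r : ℕ) (hr : r.Prime) (t : ℕ) (ht : 0 < t)
    (x : ℤ) (hx : IsCoprime x (r : ℤ)) :
    ((r ^ t : ℕ) : ℤ) ∣ ∑ i ∈ Finset.range (r ^ t), x ^ i ↔
      ∃ h : ℕ, h ≤ t - 1 ∧ orderOf (x : ZMod (r ^ t)) = r ^ h := by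
  haveI : Fact r.Prime := ⟨hr⟩
  have hr2 : 2 ≤ r := hr.two_le
  have hcast : ((r ^ t : ℕ) : ℤ) = (r : ℤ) ^ t := by push_cast; ring
  constructor
  · intro hd
    have hrdvd : (r : ℤ) ∣ ∑ i ∈ range (r ^ t), x ^ i := by
      refine dvd_trans ?_ hd
      rw [hcast]
      exact dvd_pow_self _ ht.ne'
    have hS0 : ((∑ i ∈ range (r ^ t), x ^ i : ℤ) : ZMod r) = 0 :=
      (ZMod.intCast_zmod_eq_zero_iff_dvd _ r).mpr hrdvd
    push_cast at hS0
    have hx1 : (x : ZMod r) = 1 := by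
      by_contra hne
      have h1 := geom_sum_zmod r t (x : ZMod r) hne
      rw [hS0] at h1
      exact zero_ne_one h1
    have hxr : (r : ℤ) ∣ x - 1 := by
      have : ((x - 1 : ℤ) : ZMod r) = 0 := by push_cast [hx1]; ring
      exact (ZMod.intCast_zmod_eq_zero_iff_dvd _ r).mp this
    have hA := pow_pow_sub_one r x hxr (t - 1)
    rw [Nat.sub_add_cancel ht] at hA
    have hpow : (x : ZMod (r ^ t)) ^ r ^ (t - 1) = 1 := by
      have h0 : ((x ^ r ^ (t - 1) - 1 : ℤ) : ZMod (r ^ t)) = 0 :=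
        (ZMod.intCast_zmod_eq_zero_iff_dvd _ (r ^ t)).mpr (by rwa [hcast])
      push_cast at h0
      exact sub_eq_zero.mp h0
    obtain ⟨h, hh, heq⟩ := (Nat.dvd_prime_pow hr).mp (orderOf_dvd_of_pow_eq_one hpow)
    exact ⟨h, hh, heq⟩
  · rintro ⟨h, hh, hord⟩
    have hx0 : (x : ZMod r) ≠ 0 := by
      intro h0
      have hdx : (r : ℤ) ∣ x := (ZMod.intCast_zmod_eq_zero_iff_dvd x r).mp h0
      have : IsUnit (r : ℤ) := hx.isUnit_of_dvd' hdx dvd_rfl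
      exact (Int.prime_iff_natAbs_prime.mpr (by simpa using hr)).not_unit this
    have hdvd1 : orderOf (x : ZMod r) ∣ r ^ h := by
      apply orderOf_dvd_of_pow_eq_one
      have h1 : (x : ZMod (r ^ t)) ^ r ^ h = 1 := by
        rw [← hord]; exact pow_orderOf_eq_one _
      calc (x : ZMod r) ^ r ^ h
          = (ZMod.castHom (dvd_pow_self r ht.ne') (ZMod r)) ((x : ZMod (r ^ t)) ^ r ^ h) := by
            rw [map_pow, map_intCast]
        _ = 1 := by rw [h1, map_one]
    have hdvd2 : orderOf (x : ZMod r) ∣ r - 1 :=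
      orderOf_dvd_of_pow_eq_one (ZMod.pow_card_sub_one_eq_one hx0)
    have hord1 : orderOf (x : ZMod r) = 1 := by
      obtain ⟨j, hj, hde⟩ := (Nat.dvd_prime_pow hr).mp hdvd1
      rcases Nat.eq_zero_or_pos j with hj0 | hj0
      · rw [hj0, pow_zero] at hde; exact hde
      · exfalso
        have hr1 : r ∣ r - 1 := dvd_trans (hde ▸ dvd_pow_self r hj0.ne') hdvd2
        have := Nat.le_of_dvd (by omega) hr1
        omega
    have hx1 : (x : ZMod r) = 1 := orderOf_eq_one_iff.mp hord1
    have hxr : (r : ℤ) ∣ x - 1 := by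
      have : ((x - 1 : ℤ) : ZMod r) = 0 := by push_cast [hx1]; ring
      exact (ZMod.intCast_zmod_eq_zero_iff_dvd _ r).mp this
    rw [hcast]
    exact rpow_dvd_geom_sum r x hxr t
end

section
/- Let b = r_1^{t_1} ⋯ r_ℓ^{t_ℓ} with r_1 < ⋯ < r_ℓ distinct primes, and let x be an integer coprime with b. If for each i the multiplicative order of x modulo r_i^{t_i} equals r_i^{h_i} for some 0 ≤ h_i ≤ t_i - 1, then b divides Ψ_b(x). -/
open Finset

private lemma geom_split (x : ℤ) (m n : ℕ) :
    ∑ i ∈ range (m * n), x ^ i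
      = (∑ i ∈ range m, x ^ i) * ∑ j ∈ range n, (x ^ m) ^ j := by
  induction n with
  | zero => simp
  | succ n ih =>
      rw [Nat.mul_succ, Finset.sum_range_add, ih, Finset.sum_range_succ, mul_add]
      congr 1
      rw [Finset.sum_mul]
      refine Finset.sum_congr rfl fun i _ => ?_
      rw [pow_add, pow_mul, mul_comm]

private lemma dvd_geom_sum_of_dvd_sub_s8 {q : ℤ} {x : ℤ} (hq : q ∣ x - 1) (n : ℕ) :
    q ∣ ∑ j ∈ range n, x ^ j - n := by
  have : (∑ j ∈ range n, x ^ j) - (n : ℤ) = ∑ j ∈ range n, (x ^ j - 1) := by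
    rw [Finset.sum_sub_distrib]
    simp
  rw [this]
  refine Finset.dvd_sum fun j _ => hq.trans ?_
  simpa using sub_dvd_pow_sub_pow x 1 j

/-- key local step: if q ∣ x - 1 then q^h ∣ ∑_{i < q^h} x^i. -/
private lemma pow_dvd_geom_sum {q : ℕ} {x : ℤ} (hq : (q : ℤ) ∣ x - 1) (h : ℕ) :
    (q : ℤ) ^ h ∣ ∑ i ∈ range (q ^ h), x ^ i := by
  induction h with
  | zero => simp
  | succ h ih =>
      rw [pow_succ (q : ℤ), pow_succ q, geom_split]
      apply mul_dvd_mul ih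
      have hy : (q : ℤ) ∣ x ^ q ^ h - 1 := hq.trans (by simpa using sub_dvd_pow_sub_pow x 1 (q ^ h))
      have := dvd_geom_sum_of_dvd_sub_s8 hy q
      have : (q : ℤ) ∣ (∑ j ∈ range q, (x ^ q ^ h) ^ j - q) + q := Dvd.dvd.add this dvd_rfl
      simpa using this

/-- For `b = r_1^{t_1} ⋯ r_ℓ^{t_ℓ}` with distinct primes `r_1 < ⋯ < r_ℓ` and `gcd(x,b)=1`:
if for each `i` the order of `x` modulo `r_i^{t_i}` is `r_i^{h_i}` with `0 ≤ h_i ≤ t_i - 1`,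
then `b ∣ Ψ_b(x)`. -/
theorem general_dvd_psi (ℓ : ℕ) (r : Fin ℓ → ℕ) (t : Fin ℓ → ℕ)
    (hprime : ∀ i, (r i).Prime) (hmono : StrictMono r) (ht : ∀ i, 0 < t i)
    (b : ℕ) (hb : b = ∏ i, r i ^ t i)
    (x : ℤ) (hx : IsCoprime x (b : ℤ))
    (hord : ∀ i : Fin ℓ, ∃ h : ℕ, h ≤ t i - 1 ∧
      orderOf (x : ZMod (r i ^ t i)) = r i ^ h) :
    (b : ℤ) ∣ ∑ i ∈ Finset.range b, x ^ i := by
  -- b as a product of coprime prime powers in ℤ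
  have hbz : (b : ℤ) = ∏ i, ((r i : ℤ) ^ t i) := by
    rw [hb]; push_cast; ring
  rw [hbz]
  apply Finset.prod_dvd_of_coprime
  · intro i _ j _ hij
    have hrij : r i ≠ r j := fun he => hij (hmono.injective he)
    have : Nat.Coprime (r i ^ t i) (r j ^ t j) :=
      ((Nat.coprime_primes (hprime i) (hprime j)).mpr hrij).pow _ _
    have := Nat.isCoprime_iff_coprime.mpr this
    simpa [Function.onFun] using this
  · intro i _
    set q := r i with hqdef
    set T := t i with hTdef
    obtain ⟨h, hhT, hordi⟩ := hord i
    have hqp : q.Prime := hprime i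
    haveI : Fact q.Prime := ⟨hqp⟩
    have hqpos : 0 < q := hqp.pos
    haveI : NeZero (q ^ T) := ⟨pow_ne_zero _ hqp.ne_zero⟩
    -- q^T divides b
    have hqT_dvd_b : q ^ T ∣ b := by
      rw [hb]; exact Finset.dvd_prod_of_mem _ (Finset.mem_univ i)
    -- x coprime with q
    have hxq : IsCoprime x (q : ℤ) := by
      apply hx.of_isCoprime_of_dvd_right
      exact_mod_cast Int.natCast_dvd_natCast.mpr (dvd_trans (dvd_pow_self q (ht i).ne') hqT_dvd_b)
    -- step 1 : q ∣ x - 1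
    have hx1 : (q : ℤ) ∣ x - 1 := by
      -- order of x mod q divides q^h
      have hdvd1 : orderOf (x : ZMod q) ∣ q ^ h := by
        have hfx : (ZMod.castHom (dvd_pow_self q (ht i).ne') (ZMod q)) (x : ZMod (q ^ T))
            = (x : ZMod q) := map_intCast _ x
        rw [← hordi, ← hfx]
        exact orderOf_map_dvd (ZMod.castHom (dvd_pow_self q (ht i).ne') (ZMod q)).toMonoidHom _
      -- x is a unit mod q
      have hu : IsUnit (x : ZMod q) := by
        obtain ⟨a, c, habc⟩ := hxq
        refine IsUnit.of_mul_eq_one (a : ZMod q) ?_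
        have := congrArg (fun z : ℤ => (z : ZMod q)) habc
        push_cast at this
        simp only [ZMod.natCast_self, mul_zero] at this
        rw [mul_comm] at this
        simpa using this
      -- order of x mod q divides q - 1
      have hdvd2 : orderOf (x : ZMod q) ∣ q - 1 := by
        obtain ⟨u, hu⟩ := hu
        rw [← hu, orderOf_units]
        have := orderOf_dvd_card (x := u)
        rwa [ZMod.card_units_eq_totient, Nat.totient_prime hqp] at this
      have hcop : Nat.Coprime (q ^ h) (q - 1) := by
        apply Nat.Coprime.pow_left
        exact (hqp.coprime_iff_not_dvd).mpr fun hd => by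
          have h2 := hqp.two_le
          have := Nat.le_of_dvd (by omega) hd
          omega
      have hgcd : orderOf (x : ZMod q) ∣ Nat.gcd (q ^ h) (q - 1) :=
        Nat.dvd_gcd hdvd1 hdvd2
      rw [Nat.Coprime] at hcop
      rw [hcop] at hgcd
      have : orderOf (x : ZMod q) = 1 := Nat.dvd_one.mp hgcd
      have hx1' : (x : ZMod q) = 1 := orderOf_eq_one_iff.mp this
      have : ((x - 1 : ℤ) : ZMod q) = 0 := by push_cast [hx1']; ring
      exact (ZMod.intCast_zmod_eq_zero_iff_dvd _ _).mp this
    -- step 2 : q^T ∣ x^(q^h) - 1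
    have hxd : ((q : ℤ) ^ T) ∣ x ^ q ^ h - 1 := by
      have : (x : ZMod (q ^ T)) ^ q ^ h = 1 := by
        rw [← hordi]; exact pow_orderOf_eq_one _
      have : ((x ^ q ^ h - 1 : ℤ) : ZMod (q ^ T)) = 0 := by push_cast [this]; ring
      have := (ZMod.intCast_zmod_eq_zero_iff_dvd _ _).mp this
      exact_mod_cast this
    -- split the sum : b = q^h * (b / q^h)
    have hhle : h ≤ T := le_trans hhT (Nat.sub_le _ _)
    have hd_dvd : q ^ h ∣ b := dvd_trans (pow_dvd_pow q hhle) hqT_dvd_b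
    obtain ⟨m, hm⟩ := hd_dvd
    rw [hm, geom_split]
    -- first factor divisible by q^h
    have h1 : (q : ℤ) ^ h ∣ ∑ i ∈ range (q ^ h), x ^ i := pow_dvd_geom_sum hx1 h
    -- second factor ≡ m mod q^T, and q^(T-h) ∣ m
    obtain ⟨s, hs⟩ := hqT_dvd_b
    have hmval : m = q ^ (T - h) * s := by
      have : q ^ h * m = q ^ h * (q ^ (T - h) * s) := by
        rw [← hm, hs, ← mul_assoc, ← pow_add]
        congr 2
        omega
      exact Nat.eq_of_mul_eq_mul_left (pow_pos hqpos h) this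
    have h2 : ((q : ℤ) ^ (T - h)) ∣ ∑ j ∈ range m, (x ^ q ^ h) ^ j := by
      have hcong : ((q : ℤ) ^ T) ∣ (∑ j ∈ range m, (x ^ q ^ h) ^ j) - m := by
        have : (x ^ q ^ h - 1 : ℤ) ∣ (∑ j ∈ range m, (x ^ q ^ h) ^ j) - m :=
          dvd_geom_sum_of_dvd_sub_s8 dvd_rfl m
        exact hxd.trans this
      have hmz : ((q : ℤ) ^ (T - h)) ∣ (m : ℤ) := by
        rw [hmval]; push_cast; exact Dvd.intro _ rfl
      have := (dvd_trans (pow_dvd_pow (q : ℤ) (Nat.sub_le T h)) hcong).add hmz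
      simpa using this
    have := mul_dvd_mul h1 h2
    rw [← pow_add] at this
    have heq : h + (T - h) = T := by omega
    rwa [heq] at this
end

section
/- Let q = p^m with p prime and let k divide q - 1, with n = (q-1)/k. The set R_k = {x^k : x ∈ F_q^*} of nonzero k-th powers additively generates F_q if and only if (q-1)/(p^a - 1) does not divide k for every 1 ≤ a ≤ m-1. -/
theorem mod_pow_sub_one {p : ℕ} (hp : 2 ≤ p) (a : ℕ) (ha : 0 < a) :
    ∀ m : ℕ, (p ^ m - 1) % (p ^ a - 1) = p ^ (m % a) - 1 := by
  intro m
  induction m using Nat.strong_induction_on with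
  | _ m ih =>
    rcases lt_or_ge m a with hma | hma
    · have h0 : p ^ m < p ^ a := Nat.pow_lt_pow_right (by omega) hma
      rw [Nat.mod_eq_of_lt hma,
        Nat.mod_eq_of_lt (Nat.sub_lt_sub_right (Nat.one_le_pow _ _ (by omega)) h0)]
    · have h1 : p ^ m = p ^ (m - a) * p ^ a := by
        rw [← pow_add]; congr 1; omega
      have h2 : 1 ≤ p ^ (m - a) := Nat.one_le_pow _ _ (by omega)
      have h3 : 1 ≤ p ^ a := Nat.one_le_pow _ _ (by omega)
      have hx : 1 ≤ p ^ m := Nat.one_le_pow _ _ (by omega)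
      have key : p ^ m - 1 = (p ^ a - 1) * (p ^ (m - a)) + (p ^ (m - a) - 1) := by
        zify [h2, h3, hx]
        have h1' : (p : ℤ) ^ m = (p : ℤ) ^ (m - a) * (p : ℤ) ^ a := by exact_mod_cast h1
        linear_combination h1'
      rw [key, Nat.mul_add_mod, ih (m - a) (by omega)]
      congr 2
      exact (Nat.mod_eq_sub_mod hma).symm

theorem dvd_pow_sub_one_iff {p : ℕ} (hp : 2 ≤ p) {a m : ℕ} (ha : 0 < a) :
    p ^ a - 1 ∣ p ^ m - 1 ↔ a ∣ m := by
  rw [Nat.dvd_iff_mod_eq_zero, mod_pow_sub_one hp a ha m]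
  have h1 : 1 ≤ p ^ (m % a) := Nat.one_le_pow _ _ (by omega)
  constructor
  · intro h
    rcases Nat.eq_zero_or_pos (m % a) with h' | h'
    · exact Nat.dvd_of_mod_eq_zero h'
    · have : p ≤ p ^ (m % a) := by
        calc p = p ^ 1 := (pow_one p).symm
        _ ≤ p ^ (m % a) := Nat.pow_le_pow_right (by omega) h'
      omega
  · intro h
    simp [Nat.mod_eq_zero_of_dvd h]

theorem gcd_pow_sub_one {p : ℕ} (hp : 2 ≤ p) :
    ∀ a m : ℕ, Nat.gcd (p ^ a - 1) (p ^ m - 1) = p ^ (Nat.gcd a m) - 1 := by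
  intro a
  induction a using Nat.strong_induction_on with
  | _ a ih =>
    intro m
    rcases Nat.eq_zero_or_pos a with rfl | ha
    · simp
    · rw [Nat.gcd_rec (p ^ a - 1) (p ^ m - 1), mod_pow_sub_one hp a ha m,
        ih (m % a) (Nat.mod_lt _ ha) a, Nat.gcd_rec a m, Nat.gcd_comm]

/-- If the floor quotient (p^m-1)/(p^a-1) divides p^m-1 and 0 < a < m, then a ∣ m. -/
theorem div_dvd_imp_dvd {p a m : ℕ} (hp2 : 2 ≤ p) (ha : 0 < a) (ham : a < m)
    (h : (p ^ m - 1) / (p ^ a - 1) ∣ p ^ m - 1) : a ∣ m := by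
  have hd : 0 < p ^ a - 1 := by
    have : 2 ≤ p ^ a := by
      calc 2 = 2 ^ 1 := rfl
      _ ≤ p ^ a := Nat.pow_le_pow_left hp2 1 |>.trans (Nat.pow_le_pow_right (by omega) ha)
    omega
  set e := (p ^ m - 1) / (p ^ a - 1) with he
  have hmod : (p ^ m - 1) % (p ^ a - 1) = p ^ (m % a) - 1 := mod_pow_sub_one hp2 a ha m
  have hdm : e * (p ^ a - 1) + (p ^ (m % a) - 1) = p ^ m - 1 := by
    rw [← hmod, he, mul_comm]; exact Nat.div_add_mod _ _
  by_contra hna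
  have hu : 0 < m % a := Nat.pos_of_ne_zero (fun h0 => hna (Nat.dvd_of_mod_eq_zero h0))
  have hp1u : p ≤ p ^ (m % a) := by
    calc p = p ^ 1 := (pow_one p).symm
    _ ≤ p ^ (m % a) := Nat.pow_le_pow_right (by omega) hu
  have hrpos : 0 < p ^ (m % a) - 1 := by omega
  have her : e ∣ p ^ (m % a) - 1 := by
    have h2 : e ∣ e * (p ^ a - 1) := dvd_mul_right _ _
    have h3 : p ^ (m % a) - 1 = (p ^ m - 1) - e * (p ^ a - 1) := by omega
    rw [h3]; exact Nat.dvd_sub h h2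
  have hle : e ≤ p ^ (m % a) - 1 := Nat.le_of_dvd hrpos her
  have hbound : p ^ (m - a) ≤ e := by
    rw [he, Nat.le_div_iff_mul_le hd]
    have h1 : p ^ (m - a) * p ^ a = p ^ m := by rw [← pow_add]; congr 1; omega
    have h2 : 1 ≤ p ^ (m - a) := Nat.one_le_pow _ _ (by omega)
    rw [Nat.mul_sub, mul_one, h1]
    have : p ^ (m - a) ≤ p ^ m := Nat.pow_le_pow_right (by omega) (by omega)
    omega
  have humle : m % a ≤ m - a := by
    rw [Nat.mod_eq_sub_mod (le_of_lt ham)]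
    exact Nat.mod_le _ _
  have hfin : p ^ (m % a) ≤ p ^ (m - a) := Nat.pow_le_pow_right (by omega) humle
  omega

/-- For `q = p^m` and `k ∣ q - 1`, the set `R_k` of nonzero `k`-th powers additively
generates `F_q` iff `(q-1)/(p^a-1)` does not divide `k` for all `1 ≤ a ≤ m-1`. -/
theorem Rk_generates_iff (F : Type*) [Field F] [Fintype F] (p m k : ℕ)
    (hp : p.Prime) (hm : 0 < m) (hcard : Fintype.card F = p ^ m)
    (hk : 0 < k) (hkdvd : k ∣ p ^ m - 1) :
    AddSubgroup.closure {y : F | ∃ x : F, x ≠ 0 ∧ y = x ^ k} = ⊤ ↔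
      ∀ a : ℕ, 1 ≤ a → a ≤ m - 1 → ¬ ((p ^ m - 1) / (p ^ a - 1) ∣ k) := by
  have hp2 : 2 ≤ p := hp.two_le
  set R : Set F := {y : F | ∃ x : F, x ≠ 0 ∧ y = x ^ k} with hRdef
  -- characteristic
  haveI : CharP F (ringChar F) := ringChar.charP F
  obtain ⟨n', hprime', hcard'⟩ := FiniteField.card F (ringChar F)
  have hpchar : ringChar F = p := by
    have h1 : p ∣ ringChar F ^ (n' : ℕ) := by
      rw [← hcard', hcard]; exact dvd_pow_self p hm.ne'
    exact ((Nat.prime_dvd_prime_iff_eq hp hprime').mp (hp.dvd_of_dvd_pow h1)).symm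
  haveI hchar : CharP F p := hpchar ▸ ringChar.charP F
  -- generator of the unit group
  obtain ⟨g, hg⟩ := IsCyclic.exists_generator (α := Fˣ)
  classical
  have hg_ord : orderOf g = p ^ m - 1 := by
    rw [orderOf_eq_card_of_forall_mem_zpowers hg, Nat.card_eq_fintype_card,
      Fintype.card_units, hcard]
  have hq2 : 2 ≤ p ^ m := by
    calc 2 = 2 ^ 1 := rfl
    _ ≤ p ^ m := (Nat.pow_le_pow_left hp2 1).trans (Nat.pow_le_pow_right (by omega) hm)
  -- multiplicative closedness
  have hRmul : ∀ x ∈ R, ∀ y ∈ R, x * y ∈ R := by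
    rintro _ ⟨x, hx, rfl⟩ _ ⟨y, hy, rfl⟩
    exact ⟨x * y, mul_ne_zero hx hy, (mul_pow x y k).symm⟩
  have hSmul : ∀ x ∈ AddSubgroup.closure R, ∀ y ∈ AddSubgroup.closure R,
      x * y ∈ AddSubgroup.closure R := by
    intro x hx
    induction hx using AddSubgroup.closure_induction with
    | mem r hr =>
      intro y hy
      induction hy using AddSubgroup.closure_induction with
      | mem s hs => exact AddSubgroup.subset_closure (hRmul r hr s hs)
      | zero => rw [mul_zero]; exact zero_mem _
      | add y z hy hz ihy ihz => rw [mul_add]; exact add_mem ihy ihz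
      | neg y hy ihy => rw [mul_neg]; exact neg_mem ihy
    | zero => intro y hy; rw [zero_mul]; exact zero_mem _
    | add a b ha hb iha ihb => intro y hy; rw [add_mul]; exact add_mem (iha y hy) (ihb y hy)
    | neg a ha iha => intro y hy; rw [neg_mul]; exact neg_mem (iha y hy)
  constructor
  · -- closure = ⊤ → condition
    intro htop a ha1 ha2 hdvd
    have ham : a < m := by omega
    have hadvd : a ∣ m := div_dvd_imp_dvd hp2 (by omega) ham (hdvd.trans hkdvd)
    have hpa1 : p ^ a - 1 ∣ p ^ m - 1 := (dvd_pow_sub_one_iff hp2 (by omega)).mpr hadvd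
    set e := (p ^ m - 1) / (p ^ a - 1) with hedef
    have hee : e * (p ^ a - 1) = p ^ m - 1 := Nat.div_mul_cancel hpa1
    obtain ⟨t, ht⟩ := hdvd
    haveI : ExpChar F p := ExpChar.prime hp
    set A := RingHom.eqLocus (iterateFrobenius F p a) (RingHom.id F) with hA
    have hpa_pos : 1 ≤ p ^ a := Nat.one_le_pow _ _ (by omega)
    have hRA : R ⊆ A := by
      rintro _ ⟨x, hx, rfl⟩
      show iterateFrobenius F p a (x ^ k) = RingHom.id F (x ^ k)
      rw [iterateFrobenius_def, RingHom.id_apply, ← pow_mul]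
      have hxq : x ^ (p ^ m - 1) = 1 := by
        have := FiniteField.pow_card_sub_one_eq_one x hx
        rwa [hcard] at this
      have hone : x ^ (k * (p ^ a - 1)) = 1 := by
        have hexp : k * (p ^ a - 1) = (p ^ m - 1) * t := by
          rw [ht, ← hee]; ring
        rw [hexp, pow_mul, hxq, one_pow]
      have hsplit : k * p ^ a = k * (p ^ a - 1) + k := by
        rw [Nat.mul_sub, mul_one]
        have : k ≤ k * p ^ a := Nat.le_mul_of_pos_right k (by omega)
        omega
      rw [hsplit, pow_add, hone, one_mul]
    have hleq : AddSubgroup.closure R ≤ A.toAddSubgroup := (AddSubgroup.closure_le _).mpr hRA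
    rw [htop] at hleq
    have hgA : ((g : F)) ∈ A := hleq (AddSubgroup.mem_top _)
    have hgF : (g : F) ^ (p ^ a) = (g : F) := by
      have : iterateFrobenius F p a (g : F) = RingHom.id F (g : F) := hgA
      rwa [iterateFrobenius_def, RingHom.id_apply] at this
    have hgu : g ^ (p ^ a) = g := Units.ext (by push_cast; exact hgF)
    have hgone : g ^ (p ^ a - 1) = 1 := by
      have h1 : g ^ (p ^ a - 1) * g = 1 * g := by
        rw [← pow_succ, one_mul]
        have : p ^ a - 1 + 1 = p ^ a := by omega
        rw [this, hgu]
      exact mul_right_cancel h1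
    have hdvd2 : p ^ m - 1 ∣ p ^ a - 1 := hg_ord ▸ orderOf_dvd_of_pow_eq_one hgone
    have hpa_lt : p ^ a < p ^ m := Nat.pow_lt_pow_right (by omega) ham
    have hpa2 : 1 < p ^ a := Nat.one_lt_pow (by omega) (by omega)
    have hlt2 : p ^ a - 1 < p ^ m - 1 := Nat.sub_lt_sub_right hpa_pos hpa_lt
    exact absurd (Nat.le_of_dvd (Nat.sub_pos_of_lt hpa2) hdvd2) (not_le.mpr hlt2)
  · -- condition → closure = ⊤
    intro hcond
    by_contra hS
    obtain ⟨z, hz⟩ : ∃ z : F, z ∉ AddSubgroup.closure R := by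
      by_contra h
      push_neg at h
      exact hS ((AddSubgroup.eq_top_iff' _).mpr h)
    set T : Subring F :=
      { carrier := (AddSubgroup.closure R : Set F)
        mul_mem' := fun hx hy => hSmul _ hx _ hy
        one_mem' := AddSubgroup.subset_closure ⟨1, one_ne_zero, (one_pow k).symm⟩
        add_mem' := fun hx hy => add_mem hx hy
        zero_mem' := zero_mem _
        neg_mem' := fun hx => neg_mem hx } with hT
    haveI : Fintype T := Fintype.ofFinite T
    letI : Field T := Fintype.fieldOfDomain T
    haveI : CharP T p := T.subtype.charP Subtype.coe_injective p
    obtain ⟨b, -, hbcard⟩ := FiniteField.card T p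
    -- card T < card F
    have hcardlt : Fintype.card T < Fintype.card F := by
      apply Fintype.card_lt_of_injective_of_notMem (Subtype.val : T → F) Subtype.coe_injective
        (b := z)
      rintro ⟨⟨w, hw⟩, rfl⟩
      exact hz hw
    have hblt : (b : ℕ) < m := by
      rw [hbcard, hcard] at hcardlt
      exact (Nat.pow_lt_pow_iff_right (by omega)).mp hcardlt
    -- (g^k : F) ∈ T
    have hgk : ((g : F) ^ k) ∈ T := AddSubgroup.subset_closure ⟨(g : F), Units.ne_zero g, rfl⟩
    set t0 : T := ⟨(g : F) ^ k, hgk⟩ with ht0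
    have ht0ne : t0 ≠ 0 := by
      intro h0
      apply pow_ne_zero k (Units.ne_zero g)
      exact congrArg Subtype.val h0
    have ht0pow : t0 ^ (p ^ (b : ℕ) - 1) = 1 := by
      have := FiniteField.pow_card_sub_one_eq_one t0 ht0ne
      rwa [hbcard] at this
    have hgF : (g : F) ^ (k * (p ^ (b : ℕ) - 1)) = 1 := by
      have := congrArg Subtype.val ht0pow
      simpa [ht0, ← pow_mul] using this
    have hgu : g ^ (k * (p ^ (b : ℕ) - 1)) = 1 := Units.ext (by push_cast; exact hgF)
    have hdvd1 : p ^ m - 1 ∣ k * (p ^ (b : ℕ) - 1) := hg_ord ▸ orderOf_dvd_of_pow_eq_one hgu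
    -- move to c = gcd b m
    set c := Nat.gcd (b : ℕ) m with hc
    have hcpos : 0 < c := Nat.gcd_pos_of_pos_right _ hm
    have hcm : c ∣ m := Nat.gcd_dvd_right _ _
    have hcb : c ≤ (b : ℕ) := Nat.le_of_dvd b.pos (Nat.gcd_dvd_left _ _)
    have hdvd3 : p ^ m - 1 ∣ k * (p ^ c - 1) := by
      have h1 : p ^ m - 1 ∣ k * (p ^ m - 1) := dvd_mul_left _ _
      have h2 : Nat.gcd (k * (p ^ (b : ℕ) - 1)) (k * (p ^ m - 1)) = k * (p ^ c - 1) := by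
        rw [Nat.gcd_mul_left, gcd_pow_sub_one hp2]
      exact h2 ▸ Nat.dvd_gcd hdvd1 h1
    -- conclude e ∣ k
    have hpc1 : p ^ c - 1 ∣ p ^ m - 1 := (dvd_pow_sub_one_iff hp2 hcpos).mpr hcm
    have hpcpos : 0 < p ^ c - 1 := by
      have : p ≤ p ^ c := by
        calc p = p ^ 1 := (pow_one p).symm
        _ ≤ p ^ c := Nat.pow_le_pow_right (by omega) hcpos
      omega
    have hediv : (p ^ m - 1) / (p ^ c - 1) ∣ k := by
      obtain ⟨s, hs⟩ := hdvd3
      set e2 := (p ^ m - 1) / (p ^ c - 1) with he2def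
      have hee : e2 * (p ^ c - 1) = p ^ m - 1 := Nat.div_mul_cancel hpc1
      refine ⟨s, Nat.eq_of_mul_eq_mul_right hpcpos ?_⟩
      rw [hs, ← hee]; ring
    exact hcond c hcpos (by omega) hediv
end

section
/- Let r be an odd prime, x an integer with gcd(x, r) = 1, and t ≥ 1. Then Ψ_{r^t}(x) ≡ r^{t-h} · Ψ_{r^h}(x) (mod r^t) whenever the multiplicative order of x modulo r^t equals r^h with 0 ≤ h ≤ t-1. -/
lemma sum_pow_mul_of_pow_eq_one {M : Type*} [CommRing M] (y : M) (d : ℕ)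
    (hy : y ^ d = 1) (m : ℕ) :
    ∑ i ∈ Finset.range (d * m), y ^ i = (m : M) * ∑ i ∈ Finset.range d, y ^ i := by
  induction m with
  | zero => simp
  | succ m ih =>
    rw [Nat.mul_succ, Finset.sum_range_add, ih]
    have : ∀ i, y ^ (d * m + i) = y ^ i := by
      intro i
      rw [pow_add, pow_mul, hy, one_pow, one_mul]
    simp only [this]
    push_cast
    ring

/-- For `r` an odd prime, `gcd(x,r)=1`, `t ≥ 1` and the order of `x` mod `r^t`
equal to `r^h` with `0 ≤ h ≤ t-1`:
`Ψ_{r^t}(x) ≡ r^{t-h} · Ψ_{r^h}(x) (mod r^t)`. -/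
theorem psi_modeq_pow_mul_psi (r : ℕ) (hr : r.Prime) (hrodd : Odd r)
    (x : ℤ) (hx : IsCoprime x (r : ℤ)) (t h : ℕ) (ht : 0 < t) (hh : h ≤ t - 1)
    (hord : orderOf (x : ZMod (r ^ t)) = r ^ h) :
    (∑ i ∈ Finset.range (r ^ t), x ^ i) ≡
      ((r ^ (t - h) : ℕ) : ℤ) * ∑ i ∈ Finset.range (r ^ h), x ^ i [ZMOD (r ^ t : ℕ)] := by
  have hht : h ≤ t := le_trans hh (Nat.sub_le t 1)
  have hsplit : r ^ t = r ^ h * r ^ (t - h) := by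
    rw [← pow_add, Nat.add_sub_cancel' hht]
  have hy : (x : ZMod (r ^ t)) ^ (r ^ h) = 1 := by
    rw [← hord]; exact pow_orderOf_eq_one _
  rw [Int.ModEq]
  rw [← ZMod.intCast_eq_intCast_iff']
  push_cast
  have h1 : ∑ i ∈ Finset.range (r ^ t), (x : ZMod (r ^ t)) ^ i
      = ∑ i ∈ Finset.range (r ^ h * r ^ (t - h)), (x : ZMod (r ^ t)) ^ i := by
    rw [← hsplit]
  rw [h1, sum_pow_mul_of_pow_eq_one _ _ hy]
  push_cast
  ring
end

section
/- Let p be a prime with p ∉ {3, 5} and a a positive integer. If p ≡ 1 (mod 15) then 15 divides Ψ_{15}(p^a); if p ≡ -1, 4, or -4 (mod 15) then 15 divides Ψ_{15}(p^{2a}); and if p ≡ ±2 or ±7 (mod 15) then 15 divides Ψ_{15}(p^{4a}). -/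
lemma key_sum_dvd (q : ℕ) (h : q ≡ 1 [MOD 15]) :
    15 ∣ ∑ i ∈ Finset.range 15, q ^ i := by
  have hq : (q : ZMod 15) = 1 := by
    have := (ZMod.natCast_eq_natCast_iff q 1 15).mpr h
    simpa using this
  have : ((∑ i ∈ Finset.range 15, q ^ i : ℕ) : ZMod 15) = 0 := by
    push_cast
    simp [hq]
    decide
  exact (ZMod.natCast_eq_zero_iff _ _).mp this

/-- For a prime `p ∉ {3,5}`: congruence conditions on `p` mod `15` ensuring
`15 ∣ Ψ_{15}(p^a)`, `15 ∣ Ψ_{15}(p^{2a})` or `15 ∣ Ψ_{15}(p^{4a})`. -/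
theorem fifteen_dvd_psi_cases (p : ℕ) (hp : p.Prime) (hp3 : p ≠ 3) (hp5 : p ≠ 5)
    (a : ℕ) (ha : 0 < a) :
    (p ≡ 1 [MOD 15] → 15 ∣ ∑ i ∈ Finset.range 15, (p ^ a) ^ i) ∧
    (p ≡ 14 [MOD 15] ∨ p ≡ 4 [MOD 15] ∨ p ≡ 11 [MOD 15] →
      15 ∣ ∑ i ∈ Finset.range 15, (p ^ (2 * a)) ^ i) ∧
    (p ≡ 2 [MOD 15] ∨ p ≡ 13 [MOD 15] ∨ p ≡ 7 [MOD 15] ∨ p ≡ 8 [MOD 15] →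
      15 ∣ ∑ i ∈ Finset.range 15, (p ^ (4 * a)) ^ i) := by
  refine ⟨fun h => ?_, fun h => ?_, fun h => ?_⟩
  · exact key_sum_dvd _ (by simpa using h.pow a)
  · have h2 : p ^ 2 ≡ 1 [MOD 15] := by
      rcases h with h | h | h
      · exact (h.pow 2).trans (by decide)
      · exact (h.pow 2).trans (by decide)
      · exact (h.pow 2).trans (by decide)
    refine key_sum_dvd _ ?_
    have := h2.pow a
    simpa [pow_mul] using this
  · have h4 : p ^ 4 ≡ 1 [MOD 15] := by
      rcases h with h | h | h | h
      · exact (h.pow 4).trans (by decide)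
      · exact (h.pow 4).trans (by decide)
      · exact (h.pow 4).trans (by decide)
      · exact (h.pow 4).trans (by decide)
    refine key_sum_dvd _ ?_
    have := h4.pow a
    simpa [pow_mul] using this
end
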